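/- arXiv:1804.11340 — 4 statements merged into one kernel-verified Lean document; each statement's English description precedes it below -/
import Mathlib

section
/- Let m₁ : ℂ₊ → ℂ be an analytic function with nonnegative imaginary part satisfying, with ζ = 1 - z and a fixed integer β* ≥ 1, the equation 1 - ζm₁(z) + ζ^{β*} m₁(z)^{β*+1} = 0 for all z ∈ ℂ₊. Then (ζ m₁)^{β*+1} = -ζ(1 - ζ m₁); consequently, if |ζ| ≤ 4^{-(β*+1)} then |ζ m₁(z)| ≤ 2|ζ|^{1/(β*+1)} < 1/2. -/
/-- if `1 - ζm₁ + ζ^{β*}m₁^{β*+1} = 0` with `ζ = 1-z`, `z ∈ ℂ₊`, then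
`(ζm₁)^{β*+1} = -ζ(1-ζm₁)`; and if `|ζ| ≤ 4^{-(β*+1)}` then
`|ζm₁| ≤ 2|ζ|^{1/(β*+1)} < 1/2`. -/
theorem stmt_8 (βs : ℕ) (hβ : 1 ≤ βs) (z : ℂ) (hz : 0 < z.im) (m₁ : ℂ)
    (heq : 1 - (1 - z) * m₁ + (1 - z) ^ βs * m₁ ^ (βs + 1) = 0) :
    ((1 - z) * m₁) ^ (βs + 1) = -(1 - z) * (1 - (1 - z) * m₁) ∧
    (‖1 - z‖ ≤ (4:ℝ) ^ (-((βs : ℤ) + 1)) →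
      ‖(1 - z) * m₁‖ ≤ 2 * (‖1 - z‖) ^ ((1:ℝ) / (βs + 1)) ∧
      ‖(1 - z) * m₁‖ < 1 / 2) := by
  have hw : ((1 - z) * m₁) ^ (βs + 1) = -(1 - z) * (1 - (1 - z) * m₁) := by
    rw [mul_pow, pow_succ]
    linear_combination (1 - z) * heq
  refine ⟨hw, fun ha => ?_⟩
  set a := ‖1 - z‖ with hadef
  set r := ‖(1 - z) * m₁‖ with hrdef
  have hr0 : 0 ≤ r := norm_nonneg _
  have ha0 : 0 ≤ a := norm_nonneg _
  have key : r ^ (βs + 1) ≤ a * (1 + r) := by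
    have h2 : r ^ (βs + 1) = a * ‖1 - (1 - z) * m₁‖ := by
      rw [hrdef, ← norm_pow, hw, norm_mul, norm_neg]
    rw [h2]
    gcongr
    have h4 := norm_add_le (1:ℂ) (-((1 - z) * m₁))
    rw [← sub_eq_add_neg, norm_neg, norm_one] at h4
    exact h4
  have ha16 : a ≤ 1 / 16 := by
    refine ha.trans ?_
    have hle : (-((βs:ℤ)+1)) ≤ -2 := by omega
    calc (4:ℝ) ^ (-((βs:ℤ)+1)) ≤ (4:ℝ) ^ (-2 : ℤ) :=
          zpow_le_zpow_right₀ (by norm_num) hle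
      _ = 1 / 16 := by norm_num
  have hrlt1 : r < 1 := by
    by_contra h
    push_neg at h
    have h1 : r ≤ r ^ (βs + 1) := le_self_pow₀ h (Nat.succ_ne_zero βs)
    nlinarith
  have hrn : r ^ (βs + 1) ≤ 2 * a := by nlinarith
  have hN : (0:ℝ) < (βs:ℝ) + 1 := by positivity
  have hcast : ((βs + 1 : ℕ) : ℝ) * ((1:ℝ) / ((βs:ℝ) + 1)) = 1 := by
    push_cast; field_simp
  have hreq : r = (r ^ (βs + 1)) ^ ((1:ℝ) / ((βs:ℝ) + 1)) := by
    rw [← Real.rpow_natCast r (βs + 1), ← Real.rpow_mul hr0, hcast, Real.rpow_one]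
  have hrle : r ≤ (2 * a) ^ ((1:ℝ) / ((βs:ℝ) + 1)) := by
    rw [hreq]
    exact Real.rpow_le_rpow (by positivity) hrn (by positivity)
  have hsplit : (2 * a) ^ ((1:ℝ) / ((βs:ℝ) + 1))
      = (2:ℝ) ^ ((1:ℝ) / ((βs:ℝ) + 1)) * a ^ ((1:ℝ) / ((βs:ℝ) + 1)) :=
    Real.mul_rpow (by norm_num) ha0
  have hexp1 : (1:ℝ) / ((βs:ℝ) + 1) ≤ 1 := by
    have hβ' : (1:ℝ) ≤ (βs:ℝ) := by exact_mod_cast hβ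
    rw [div_le_one hN]; linarith
  have h2le : (2:ℝ) ^ ((1:ℝ) / ((βs:ℝ) + 1)) ≤ 2 := by
    calc (2:ℝ) ^ ((1:ℝ) / ((βs:ℝ) + 1)) ≤ (2:ℝ) ^ (1:ℝ) :=
          Real.rpow_le_rpow_of_exponent_le one_le_two hexp1
      _ = 2 := Real.rpow_one 2
  constructor
  · calc r ≤ (2 * a) ^ ((1:ℝ) / ((βs:ℝ) + 1)) := hrle
      _ = (2:ℝ) ^ ((1:ℝ) / ((βs:ℝ) + 1)) * a ^ ((1:ℝ) / ((βs:ℝ) + 1)) := hsplit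
      _ ≤ 2 * a ^ ((1:ℝ) / ((βs:ℝ) + 1)) := by
          have : (0:ℝ) ≤ a ^ ((1:ℝ) / ((βs:ℝ) + 1)) := Real.rpow_nonneg ha0 _
          nlinarith
  · -- strict bound
    have haN : a ^ ((1:ℝ) / ((βs:ℝ) + 1)) ≤ 1 / 4 := by
      have ha' : a ≤ (4:ℝ) ^ (-(((βs:ℝ) + 1))) := by
        have : ((-((βs:ℤ)+1) : ℤ) : ℝ) = -((βs:ℝ) + 1) := by push_cast; ring
        rw [← this, Real.rpow_intCast]
        exact ha
      calc a ^ ((1:ℝ) / ((βs:ℝ) + 1))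
          ≤ ((4:ℝ) ^ (-(((βs:ℝ) + 1)))) ^ ((1:ℝ) / ((βs:ℝ) + 1)) :=
            Real.rpow_le_rpow ha0 ha' (by positivity)
        _ = (4:ℝ) ^ (-(((βs:ℝ) + 1)) * ((1:ℝ) / ((βs:ℝ) + 1))) := by
            rw [← Real.rpow_mul (by norm_num)]
        _ = (4:ℝ) ^ (-1 : ℝ) := by
            congr 1
            field_simp
        _ = 1 / 4 := by
            rw [Real.rpow_neg_one]; norm_num
    have h2lt : (2:ℝ) ^ ((1:ℝ) / ((βs:ℝ) + 1)) < 2 := by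
      have hexp2 : (1:ℝ) / ((βs:ℝ) + 1) < 1 := by
        have hβ' : (1:ℝ) ≤ (βs:ℝ) := by exact_mod_cast hβ
        rw [div_lt_one hN]; linarith
      calc (2:ℝ) ^ ((1:ℝ) / ((βs:ℝ) + 1)) < (2:ℝ) ^ (1:ℝ) :=
            Real.rpow_lt_rpow_of_exponent_lt one_lt_two hexp2
        _ = 2 := Real.rpow_one 2
    have h2pos : (0:ℝ) < (2:ℝ) ^ ((1:ℝ) / ((βs:ℝ) + 1)) := Real.rpow_pos_of_pos (by norm_num) _
    have haN0 : (0:ℝ) ≤ a ^ ((1:ℝ) / ((βs:ℝ) + 1)) := Real.rpow_nonneg ha0 _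
    calc r ≤ (2:ℝ) ^ ((1:ℝ) / ((βs:ℝ) + 1)) * a ^ ((1:ℝ) / ((βs:ℝ) + 1)) := by
          rw [← hsplit]; exact hrle
      _ ≤ (2:ℝ) ^ ((1:ℝ) / ((βs:ℝ) + 1)) * (1 / 4) := by nlinarith
      _ < 2 * (1 / 4) := by nlinarith
      _ = 1 / 2 := by norm_num
end

section
/- Let m : ℂ₊ → ℂ be analytic with Im m(z) ≥ 0, satisfying 1 + (z-1)m(z) + Σ_{γ=1}^{γ*} m(z)/(ξ_γ⁻¹ - m(z)) = 0 where ξ₁,…,ξ_{γ*} are fixed nonzero real numbers and γ* ≥ 2. Then m is bounded on ℂ₊: there is C > 0 (depending only on γ* and the ξ_γ) with |m(z)| ≤ C for all z ∈ ℂ₊. In particular, if (z-1)m(z) → γ* - 1 as z → 1, then m would have negative imaginary part near z = 1, contradicting Im m ≥ 0. -/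
open Complex Set

set_option maxHeartbeats 2000000 in
/-- a Herglotz-type analytic solution of the quadratic-polynomial Dyson
equation (diagonal form) is bounded on the upper half-plane. -/
theorem stmt_11 (γs : ℕ) (hγ : 2 ≤ γs) (ξ : Fin γs → ℝ) (hξ : ∀ γ, ξ γ ≠ 0)
    (m : ℂ → ℂ)
    (hanal : DifferentiableOn ℂ m {z : ℂ | 0 < z.im})
    (hherg : ∀ z : ℂ, 0 < z.im → 0 ≤ (m z).im)
    (heq : ∀ z : ℂ, 0 < z.im → (∀ γ, ((ξ γ : ℂ))⁻¹ ≠ m z) →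
      1 + (z - 1) * m z + ∑ γ : Fin γs, m z / (((ξ γ : ℂ))⁻¹ - m z) = 0) :
    ∃ C : ℝ, 0 < C ∧ ∀ z : ℂ, 0 < z.im → ‖m z‖ ≤ C := by
  set U : Set ℂ := {z : ℂ | 0 < z.im} with hUdef
  have hUopen : IsOpen U := by
    have : U = Complex.im ⁻¹' Set.Ioi 0 := rfl
    rw [this]; exact isOpen_Ioi.preimage Complex.continuous_im
  have hUconn : IsPreconnected U := (convex_halfSpace_im_gt 0).isPreconnected
  have hmc : ∀ z ∈ U, ContinuousAt m z := fun z hz =>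
    (hanal.differentiableAt (hUopen.mem_nhds hz)).continuousAt
  by_cases hcase : ∃ z₀ ∈ U, (m z₀).im = 0
  · -- the maximum-modulus (constant) case
    obtain ⟨z₀, hz₀, him0⟩ := hcase
    set f : ℂ → ℂ := fun z => Complex.exp (Complex.I * m z) with hf
    have hfd : DifferentiableOn ℂ f U :=
      Complex.differentiable_exp.comp_differentiableOn
        ((differentiableOn_const Complex.I).mul hanal)
    have hnorm : ∀ z, ‖f z‖ = Real.exp (-(m z).im) := by
      intro z
      simp [hf, Complex.norm_exp, Complex.mul_re, Complex.I_re,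
        Complex.I_im]
    have hmax : IsMaxOn (norm ∘ f) U z₀ := by
      intro z hz
      simp only [Function.comp_apply, hnorm, him0, neg_zero, Real.exp_zero]
      have := hherg z hz
      have : Real.exp (-(m z).im) ≤ Real.exp 0 := Real.exp_le_exp.2 (by linarith)
      simpa using this
    have heqexp := Complex.eqOn_of_isPreconnected_of_isMaxOn_norm hUconn hUopen hfd hz₀ hmax
    have hdist : ∀ z ∈ U, m z - m z₀ = 0 ∨ 2 * Real.pi ≤ ‖m z - m z₀‖ := by
      intro z hz
      have h1 : Complex.exp (Complex.I * m z) = Complex.exp (Complex.I * m z₀) := heqexp hz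
      rw [Complex.exp_eq_exp_iff_exists_int] at h1
      obtain ⟨k, hk⟩ := h1
      have h2 : Complex.I * m z = Complex.I * (m z₀ + (k : ℂ) * (2 * Real.pi)) := by
        rw [hk]; ring
      have h3 : m z = m z₀ + (k : ℂ) * (2 * Real.pi) :=
        mul_left_cancel₀ Complex.I_ne_zero h2
      have h4 : m z - m z₀ = (k : ℂ) * (2 * Real.pi) := by rw [h3]; ring
      rcases eq_or_ne k 0 with h0 | h0
      · left; rw [h4, h0]; simp
      · right
        rw [h4]
        have e1 : ((k : ℂ) * (2 * Real.pi)) = (((k : ℝ) * (2 * Real.pi) : ℝ) : ℂ) := by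
          push_cast; ring
        rw [e1, Complex.norm_real, Real.norm_eq_abs, abs_mul]
        have hk1 : (1 : ℝ) ≤ |(k : ℝ)| := by
          have h := Int.one_le_abs h0
          calc (1:ℝ) = ((1:ℤ):ℝ) := by norm_cast
            _ ≤ ((|k|:ℤ):ℝ) := by exact_mod_cast h
            _ = |(k:ℝ)| := by push_cast; ring
        have h2pi : |2 * Real.pi| = 2 * Real.pi := abs_of_pos (by positivity)
        rw [h2pi]
        nlinarith [Real.pi_pos]
    -- clopen argument to show the distance is < 1 everywhere
    set u : Set ℂ := {z | z ∈ U ∧ ‖m z - m z₀‖ < 1} with hu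
    set v : Set ℂ := {z | z ∈ U ∧ 1 < ‖m z - m z₀‖} with hv
    have hou : IsOpen u := by
      rw [isOpen_iff_mem_nhds]
      rintro z ⟨hzU, hz1⟩
      have hca : ContinuousAt (fun w => ‖m w - m z₀‖) z :=
        continuous_norm.continuousAt.comp ((hmc z hzU).sub continuousAt_const)
      have h1 : (fun w => ‖m w - m z₀‖) ⁻¹' Set.Iio 1 ∈ nhds z :=
        hca.preimage_mem_nhds (Iio_mem_nhds hz1)
      filter_upwards [h1, hUopen.mem_nhds hzU] with w hw1 hw2
      exact ⟨hw2, hw1⟩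
    have hov : IsOpen v := by
      rw [isOpen_iff_mem_nhds]
      rintro z ⟨hzU, hz1⟩
      have hca : ContinuousAt (fun w => ‖m w - m z₀‖) z :=
        continuous_norm.continuousAt.comp ((hmc z hzU).sub continuousAt_const)
      have h1 : (fun w => ‖m w - m z₀‖) ⁻¹' Set.Ioi 1 ∈ nhds z :=
        hca.preimage_mem_nhds (Ioi_mem_nhds hz1)
      filter_upwards [h1, hUopen.mem_nhds hzU] with w hw1 hw2
      exact ⟨hw2, hw1⟩
    have hdisj : Disjoint u v := by
      rw [Set.disjoint_left]
      rintro z ⟨_, h1⟩ ⟨_, h2⟩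
      linarith
    have hsub : U ⊆ u ∪ v := by
      intro z hz
      rcases hdist z hz with h | h
      · left; exact ⟨hz, by rw [h]; simp⟩
      · right
        refine ⟨hz, ?_⟩
        nlinarith [Real.pi_gt_three]
    have hneu : (U ∩ u).Nonempty := ⟨z₀, hz₀, hz₀, by simp⟩
    have hUu : U ⊆ u := hUconn.subset_left_of_subset_union hou hov hdisj hsub hneu
    refine ⟨‖m z₀‖ + 1, by positivity, ?_⟩
    intro z hz
    obtain ⟨-, hlt⟩ := hUu hz
    calc ‖m z‖ = ‖(m z - m z₀) + m z₀‖ := by ring_nf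
      _ ≤ ‖m z - m z₀‖ + ‖m z₀‖ := norm_add_le _ _
      _ ≤ ‖m z₀‖ + 1 := by linarith
  · -- the main case : Im m > 0 everywhere
    push_neg at hcase
    have hmpos : ∀ z ∈ U, 0 < (m z).im := fun z hz =>
      lt_of_le_of_ne (hherg z hz) (Ne.symm (hcase z hz))
    set n : ℝ := (γs : ℝ) with hn
    clear_value n
    have hn2 : (2 : ℝ) ≤ n := by rw [hn]; exact_mod_cast hγ
    set r : ℝ := 1 + ∑ γ : Fin γs, |(ξ γ)⁻¹| with hrdef
    clear_value r
    have hr1 : (1 : ℝ) ≤ r := by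
      rw [hrdef]
      exact le_add_of_nonneg_right (Finset.sum_nonneg fun γ _ => abs_nonneg _)
    have hrpos : (0 : ℝ) < r := lt_of_lt_of_le one_pos hr1
    have hcabs : ∀ γ : Fin γs, ‖((ξ γ : ℂ))⁻¹‖ ≤ r := by
      intro γ
      have h1 : ‖((ξ γ : ℂ))⁻¹‖ = |(ξ γ)⁻¹| := by
        rw [norm_inv, Complex.norm_real, Real.norm_eq_abs, abs_inv]
      rw [h1]
      have h2 := Finset.single_le_sum (f := fun γ => |(ξ γ)⁻¹|)
        (fun i _ => abs_nonneg _) (Finset.mem_univ γ)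
      rw [hrdef]
      linarith
    have hne : ∀ z ∈ U, ∀ γ : Fin γs, ((ξ γ : ℂ))⁻¹ ≠ m z := by
      intro z hz γ h
      have h1 : (((ξ γ : ℂ))⁻¹).im = 0 := by
        rw [(Complex.ofReal_inv (ξ γ)).symm, Complex.ofReal_im]
      have := hmpos z hz
      rw [← h, h1] at this
      exact lt_irrefl 0 this
    set E : ℂ → ℂ := fun z => ∑ γ : Fin γs, ((ξ γ : ℂ))⁻¹ / (((ξ γ : ℂ))⁻¹ - m z) with hEdef
    clear_value E
    have eqKey : ∀ z ∈ U, (z - 1) * m z = (γs : ℂ) - 1 - E z := by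
      intro z hz
      have H := heq z hz (hne z hz)
      have hterm : ∀ γ : Fin γs,
          m z / (((ξ γ : ℂ))⁻¹ - m z) = ((ξ γ : ℂ))⁻¹ / (((ξ γ : ℂ))⁻¹ - m z) - 1 := by
        intro γ
        have hd : ((ξ γ : ℂ))⁻¹ - m z ≠ 0 := sub_ne_zero.mpr (hne z hz γ)
        have h1 : ((ξ γ : ℂ))⁻¹ / (((ξ γ : ℂ))⁻¹ - m z) - 1
            = (((ξ γ : ℂ))⁻¹ - (((ξ γ : ℂ))⁻¹ - m z)) / (((ξ γ : ℂ))⁻¹ - m z) := by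
          rw [sub_div, div_self hd]
        rw [h1]
        congr 1
        ring
      rw [Finset.sum_congr rfl (fun γ _ => hterm γ), Finset.sum_sub_distrib,
        Finset.sum_const, Finset.card_univ, Fintype.card_fin, nsmul_eq_mul, mul_one] at H
      have hEz : E z = ∑ γ : Fin γs, ((ξ γ : ℂ))⁻¹ / (((ξ γ : ℂ))⁻¹ - m z) := by rw [hEdef]
      rw [← hEz] at H
      linear_combination H
    set K₀ : ℝ := 8 * n * r with hK₀def
    clear_value K₀
    have hnpos : (0:ℝ) < n := by linarith
    have hK₀pos : 0 < K₀ := by rw [hK₀def]; positivity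
    -- |E z| * |m z| ≤ 2 n r  whenever |m z| ≥ 2 r
    have hEb : ∀ z ∈ U, 2 * r ≤ ‖m z‖ →
        ‖E z‖ * ‖m z‖ ≤ 2 * n * r := by
      intro z hz hm2r
      have hmabs : (0:ℝ) ≤ ‖m z‖ := norm_nonneg _
      have step : ∀ γ : Fin γs,
          ‖((ξ γ : ℂ))⁻¹ / (((ξ γ : ℂ))⁻¹ - m z)‖ * ‖m z‖ ≤ 2 * r := by
        intro γ
        have hlow : ‖m z‖ - r ≤ ‖((ξ γ : ℂ))⁻¹ - m z‖ := by
          have h1 := norm_sub_norm_le (m z) (((ξ γ : ℂ))⁻¹)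
          rw [norm_sub_rev] at h1
          linarith [hcabs γ]
        have hdpos : (0:ℝ) < ‖((ξ γ : ℂ))⁻¹ - m z‖ := by linarith
        rw [norm_div, div_mul_eq_mul_div, div_le_iff₀ hdpos]
        nlinarith [hcabs γ, norm_nonneg (((ξ γ : ℂ))⁻¹)]
      have hEz : E z = ∑ γ : Fin γs, ((ξ γ : ℂ))⁻¹ / (((ξ γ : ℂ))⁻¹ - m z) := by rw [hEdef]
      rw [hEz]
      calc ‖∑ γ : Fin γs, ((ξ γ : ℂ))⁻¹ / (((ξ γ : ℂ))⁻¹ - m z)‖ *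
              ‖m z‖
          ≤ (∑ γ : Fin γs, ‖((ξ γ : ℂ))⁻¹ / (((ξ γ : ℂ))⁻¹ - m z)‖) *
              ‖m z‖ := by
            exact mul_le_mul_of_nonneg_right (norm_sum_le _ _) hmabs
        _ = ∑ γ : Fin γs,
              ‖((ξ γ : ℂ))⁻¹ / (((ξ γ : ℂ))⁻¹ - m z)‖ * ‖m z‖ :=
            Finset.sum_mul _ _ _
        _ ≤ ∑ _γ : Fin γs, 2 * r := Finset.sum_le_sum fun γ _ => step γ
        _ = 2 * n * r := by
            rw [Finset.sum_const, Finset.card_univ, Fintype.card_fin, nsmul_eq_mul]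
            rw [hn]; ring
    have hE14 : ∀ z ∈ U, K₀ ≤ ‖m z‖ → ‖E z‖ ≤ 1 / 4 := by
      intro z hz hK
      have h2r : 2 * r ≤ ‖m z‖ := le_trans (by rw [hK₀def]; nlinarith) hK
      have h1 := hEb z hz h2r
      have h2 : (0:ℝ) ≤ ‖E z‖ := norm_nonneg _
      have h3 : 8 * n * r ≤ ‖m z‖ := by rw [← hK₀def]; exact hK
      nlinarith [mul_pos hnpos hrpos]
    -- |m z| * |z - 1| ∈ [3/4 , n] when |m z| ≥ K₀
    have hnc : ‖(γs : ℂ) - 1‖ = n - 1 := by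
      rw [hn]
      rw [show ((γs : ℂ) - 1) = (((γs : ℝ) - 1 : ℝ) : ℂ) by push_cast; ring,
        Complex.norm_real, Real.norm_eq_abs, _root_.abs_of_nonneg (by rw [hn] at hn2; linarith)]
    have hprod : ∀ z ∈ U, K₀ ≤ ‖m z‖ →
        3 / 4 ≤ ‖m z‖ * ‖z - 1‖ ∧
          ‖m z‖ * ‖z - 1‖ ≤ n := by
      intro z hz hK
      have h1 : ‖m z‖ * ‖z - 1‖ = ‖(γs : ℂ) - 1 - E z‖ := by
        rw [mul_comm, ← norm_mul, eqKey z hz]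
      have hE := hE14 z hz hK
      constructor
      · rw [h1]
        have h2 : ‖(γs : ℂ) - 1‖ - ‖E z‖ ≤
            ‖(γs : ℂ) - 1 - E z‖ := by
          have := norm_sub_norm_le ((γs : ℂ) - 1) (E z)
          simpa using this
        rw [hnc] at h2
        linarith
      · rw [h1]
        have h2 : ‖(γs : ℂ) - 1 - E z‖ ≤
            ‖(γs : ℂ) - 1‖ + ‖E z‖ := by
          have := norm_sub_le ((γs : ℂ) - 1) (E z)
          simpa using this
        rw [hnc] at h2
        linarith
    -- no large value on the line Re z = 1
    have htang0 : ∀ z ∈ U, K₀ ≤ ‖m z‖ → z.re = 1 → False := by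
      intro z hz hK hre
      have hwm := eqKey z hz
      set A : ℂ := (γs : ℂ) - 1 - E z with hA
      set w : ℂ := z - 1 with hw
      clear_value A w
      have him : Complex.normSq w * (m z).im = A.re * (-w.im) + A.im * w.re := by
        have h2 : ((Complex.normSq w : ℝ) : ℂ) * m z = A * (starRingEnd ℂ) w := by
          calc ((Complex.normSq w : ℝ) : ℂ) * m z
              = (w * (starRingEnd ℂ) w) * m z := by rw [Complex.mul_conj]
            _ = (w * m z) * (starRingEnd ℂ) w := by ring
            _ = A * (starRingEnd ℂ) w := by rw [hwm]
        have h3 := congrArg Complex.im h2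
        simpa [Complex.mul_im, Complex.conj_re, Complex.conj_im, Complex.ofReal_re,
          Complex.ofReal_im] using h3
      have hwre : w.re = 0 := by rw [hw]; simp [hre]
      have hwim : w.im = z.im := by rw [hw]; simp
      have hAre : A.re = n - 1 - (E z).re := by
        rw [hA]; simp [Complex.sub_re, Complex.natCast_re, hn]
      have hEre : (E z).re ≤ 1 / 4 :=
        le_trans (Complex.re_le_norm _) (hE14 z hz hK)
      have hArepos : 0 < A.re := by rw [hAre]; linarith
      have himz : 0 < z.im := hz
      have hns : 0 < Complex.normSq w := by
        rw [Complex.normSq_pos]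
        intro h0
        rw [h0] at hwim
        simp at hwim
        rw [← hwim] at himz
        exact lt_irrefl 0 himz
      have himm := hmpos z hz
      rw [hwre, hwim] at him
      nlinarith
    set ρ : ℝ := 1 / (32 * n * r) with hρdef
    clear_value ρ
    have hρpos : 0 < ρ := by rw [hρdef]; positivity
    have hρK : ρ * (32 * n * r) = 1 := by
      rw [hρdef]; field_simp
    have h32 : (0:ℝ) < 32 * n * r := by positivity
    -- main claim : |m| < K₀ near z = 1
    have hmain : ∀ z ∈ U, ‖z - 1‖ ≤ ρ → ‖m z‖ < K₀ := by
      intro z₀ hz₀ hwρ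
      by_contra hKle
      push_neg at hKle
      set x₀ : ℝ := z₀.re - 1 with hx₀
      set y₀ : ℝ := z₀.im with hy₀
      clear_value x₀ y₀
      have hy₀pos : 0 < y₀ := by rw [hy₀]; exact hz₀
      set φ : ℝ → ℂ := fun t => ((1 + t * x₀ : ℝ) : ℂ) + (y₀ : ℝ) * Complex.I with hφ
      clear_value φ
      have hφre : ∀ t, (φ t).re = 1 + t * x₀ := by intro t; simp [hφ]
      have hφim : ∀ t, (φ t).im = y₀ := by intro t; simp [hφ]
      have hφU : ∀ t, φ t ∈ U := by intro t; show 0 < (φ t).im; rw [hφim]; exact hy₀pos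
      have hφ1 : φ 1 = z₀ := by
        apply Complex.ext
        · rw [hφre, hx₀]; ring
        · rw [hφim, hy₀]
      have hφcont : Continuous φ := by
        rw [hφ]
        apply Continuous.add
        · exact Complex.continuous_ofReal.comp
            (continuous_const.add (continuous_id.mul continuous_const))
        · exact continuous_const
      have hφd : ∀ t ∈ Set.Icc (0:ℝ) 1, ‖φ t - 1‖ ≤ ρ := by
        intro t ht
        have h1 : Complex.normSq (φ t - 1) ≤ Complex.normSq (z₀ - 1) := by
          rw [Complex.normSq_apply, Complex.normSq_apply]
          have e1 : (φ t - 1).re = t * x₀ := by simp [Complex.sub_re, hφre t]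
          have e2 : (φ t - 1).im = y₀ := by simp [Complex.sub_im, hφim t]
          have e3 : (z₀ - 1).re = x₀ := by rw [hx₀]; simp [Complex.sub_re]
          have e4 : (z₀ - 1).im = y₀ := by rw [hy₀]; simp [Complex.sub_im]
          rw [e1, e2, e3, e4]
          nlinarith [ht.1, ht.2, mul_nonneg (mul_nonneg (sub_nonneg.2 ht.2)
            (by linarith [ht.1] : (0:ℝ) ≤ 1 + t)) (mul_self_nonneg x₀)]
        have h2 : ‖φ t - 1‖ ≤ ‖z₀ - 1‖ := by
          rw [Complex.norm_def, Complex.norm_def]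
          exact Real.sqrt_le_sqrt h1
        linarith
      set g : ℝ → ℝ := fun t => ‖m (φ t)‖ with hg
      clear_value g
      have hgt : ∀ t, g t = ‖m (φ t)‖ := fun t => by rw [hg]
      have hgc : Continuous g := by
        rw [hg, continuous_iff_continuousAt]
        intro t
        exact continuous_norm.continuousAt.comp
          ((hmc (φ t) (hφU t)).comp hφcont.continuousAt)
      have hdich : ∀ t ∈ Set.Icc (0:ℝ) 1, g t < K₀ ∨ 3 * K₀ ≤ g t := by
        intro t ht
        by_cases hKt : K₀ ≤ g t
        · right
          have hKt' : K₀ ≤ ‖m (φ t)‖ := by rw [← hgt t]; exact hKt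
          have h1 := (hprod (φ t) (hφU t) hKt').1
          rw [← hgt t] at h1
          have h2 := hφd t ht
          have h3 : (0:ℝ) ≤ g t := by rw [hgt t]; exact norm_nonneg _
          have h4 : g t * ‖φ t - 1‖ ≤ g t * ρ :=
            mul_le_mul_of_nonneg_left h2 h3
          have h5 : 3 / 4 ≤ g t * ρ := by
            calc (3:ℝ)/4 ≤ g t * ‖φ t - 1‖ := h1
              _ ≤ g t * ρ := h4
          have e : g t * (ρ * (32 * n * r)) = g t := by rw [hρK]; ring
          have h6 := mul_le_mul_of_nonneg_right h5 (le_of_lt h32)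
          rw [hK₀def]
          nlinarith [e, h6]
        · left; linarith [not_le.mp hKt]
      set u : Set ℝ := {t | 2 * K₀ < g t} with hu
      set v : Set ℝ := {t | g t < 2 * K₀} with hv
      have hou : IsOpen u := isOpen_lt continuous_const hgc
      have hov : IsOpen v := isOpen_lt hgc continuous_const
      have hdisj : Disjoint u v := by
        rw [Set.disjoint_left]
        intro t h1 h2
        simp only [hu, hv, Set.mem_setOf_eq] at h1 h2
        linarith
      have hsub : Set.Icc (0:ℝ) 1 ⊆ u ∪ v := by
        intro t ht
        rcases hdich t ht with h | h
        · right; show g t < 2 * K₀; linarith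
        · left; show 2 * K₀ < g t; linarith
      have hneu : (Set.Icc (0:ℝ) 1 ∩ u).Nonempty := by
        refine ⟨1, Set.mem_Icc.mpr ⟨zero_le_one, le_refl 1⟩, ?_⟩
        show 2 * K₀ < g 1
        have hg1 : g 1 = ‖m z₀‖ := by rw [hgt 1, hφ1]
        rcases hdich 1 (Set.mem_Icc.mpr ⟨zero_le_one, le_refl 1⟩) with h | h
        · rw [hg1] at h; linarith
        · linarith
      have hIu : Set.Icc (0:ℝ) 1 ⊆ u :=
        isPreconnected_Icc.subset_left_of_subset_union hou hov hdisj hsub hneu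
      have h0u : (0:ℝ) ∈ u := hIu (Set.mem_Icc.mpr ⟨le_refl 0, zero_le_one⟩)
      have h0K : K₀ ≤ ‖m (φ 0)‖ := by
        have h7 : 2 * K₀ < g 0 := h0u
        rw [hgt 0] at h7
        linarith
      exact htang0 (φ 0) (hφU 0) h0K (by rw [hφre]; ring)
    -- conclusion
    have h32' : (0:ℝ) < 32 * n * n * r := by positivity
    refine ⟨K₀ + 32 * n * n * r + 1, by linarith [hK₀pos], ?_⟩
    intro z hz
    by_cases h1 : ‖z - 1‖ ≤ ρ
    · have := hmain z hz h1
      linarith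
    · push_neg at h1
      by_cases h2 : ‖m z‖ < K₀
      · linarith
      · push_neg at h2
        have h3 := (hprod z hz h2).2
        have h4 : ‖m z‖ * ρ ≤ n := by
          calc ‖m z‖ * ρ ≤ ‖m z‖ * ‖z - 1‖ :=
              mul_le_mul_of_nonneg_left (le_of_lt h1) (norm_nonneg _)
            _ ≤ n := h3
        have h5 : ‖m z‖ ≤ 32 * n * n * r := by
          have e : ‖m z‖ * (ρ * (32 * n * r)) = ‖m z‖ := by
            rw [hρK]; ring
          have h6 := mul_le_mul_of_nonneg_right h4 (le_of_lt h32)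
          nlinarith [e, h6]
        linarith [hK₀pos]
end

section
/- Suppose K₀ ∈ ℂ^{(γ*+1)×(γ*+1)} is block diagonal with (1,1)-entry 1 and lower-right block Ξ⁻¹ for a Hermitian invertible Ξ ∈ ℂ^{γ*×γ*}, and K_γ = e₁e_{γ+1}ᵗ + e_{γ+1}e₁ᵗ for 1 ≤ γ ≤ γ*. If M ∈ ℂ^{(γ*+1)×(γ*+1)} is block diagonal with (1,1)-entry M₁₁ and lower-right block M̂, and M solves I + (zJ - K₀)M + Σ_γ K_γ M K_γ M = 0 with J = e₁e₁ᵗ, then: (i) 1 + (z-1)M₁₁ + M₁₁ Tr(M̂) = 0, and (ii) M̂ = (Ξ⁻¹ - M₁₁ I)⁻¹ provided Ξ⁻¹ - M₁₁I is invertible. -/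
open Matrix

/-- for the minimal linearization of `1 - xᵗΞx`, a block-diagonal solution `M`
of the Dyson equation `I + (zJ - K₀)M + Σ_γ K_γ M K_γ M = 0` satisfies
`1 + (z-1)M₁₁ + M₁₁ Tr M̂ = 0` and `M̂ = (Ξ⁻¹ - M₁₁ I)⁻¹` (when the latter is invertible). -/
theorem stmt_18 (γs : ℕ) (hγ : 2 ≤ γs) (Ξ : Matrix (Fin γs) (Fin γs) ℂ)
    (hΞ : Ξ.IsHermitian) (hΞinv : IsUnit Ξ) (z : ℂ) (M₁₁ : ℂ)
    (Mhat : Matrix (Fin γs) (Fin γs) ℂ)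
    (K₀ : Matrix (Fin 1 ⊕ Fin γs) (Fin 1 ⊕ Fin γs) ℂ)
    (hK₀ : K₀ = Matrix.fromBlocks 1 0 0 Ξ⁻¹)
    (K : Fin γs → Matrix (Fin 1 ⊕ Fin γs) (Fin 1 ⊕ Fin γs) ℂ)
    (hK : ∀ γ : Fin γs, K γ = Matrix.fromBlocks 0
      (Matrix.of fun (_ : Fin 1) (j : Fin γs) => if j = γ then (1:ℂ) else 0)
      (Matrix.of fun (i : Fin γs) (_ : Fin 1) => if i = γ then (1:ℂ) else 0) 0)
    (J : Matrix (Fin 1 ⊕ Fin γs) (Fin 1 ⊕ Fin γs) ℂ)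
    (hJ : J = Matrix.fromBlocks 1 0 0 0)
    (M : Matrix (Fin 1 ⊕ Fin γs) (Fin 1 ⊕ Fin γs) ℂ)
    (hM : M = Matrix.fromBlocks (Matrix.of fun (_ _ : Fin 1) => M₁₁) 0 0 Mhat)
    (hDEL : 1 + (z • J - K₀) * M + ∑ γ : Fin γs, K γ * M * (K γ * M) = 0) :
    (1 + (z - 1) * M₁₁ + M₁₁ * Mhat.trace = 0) ∧
    (IsUnit (Ξ⁻¹ - M₁₁ • (1 : Matrix (Fin γs) (Fin γs) ℂ)) →
      Mhat = (Ξ⁻¹ - M₁₁ • (1 : Matrix (Fin γs) (Fin γs) ℂ))⁻¹) := by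
  have hKM : ∀ γ : Fin γs, K γ * M =
      Matrix.fromBlocks 0 (Matrix.of fun (_ : Fin 1) j => Mhat γ j)
        (Matrix.of fun i (_ : Fin 1) => if i = γ then M₁₁ else 0) 0 := by
    intro γ
    rw [hK, hM]
    ext i j
    rcases i with i | i <;> rcases j with j | j <;>
      simp [Matrix.mul_apply, Fintype.sum_sum_type, Finset.sum_ite_eq, ite_mul]
  have hKM2 : ∀ γ : Fin γs, K γ * M * (K γ * M) =
      Matrix.fromBlocks (Matrix.of fun (_ _ : Fin 1) => M₁₁ * Mhat γ γ) 0 0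
        (Matrix.of fun i j => if i = γ then M₁₁ * Mhat γ j else 0) := by
    intro γ
    rw [hKM]
    ext i j
    rcases i with i | i <;> rcases j with j | j <;>
      simp [Matrix.mul_apply, Fintype.sum_sum_type, Finset.sum_ite_eq,
        ite_mul, mul_comm]
  have hsum : ∑ γ : Fin γs, K γ * M * (K γ * M) =
      Matrix.fromBlocks (Matrix.of fun (_ _ : Fin 1) => M₁₁ * Mhat.trace) 0 0
        (M₁₁ • Mhat) := by
    ext i j
    rw [Matrix.sum_apply]
    rcases i with i | i <;> rcases j with j | j <;>
      simp [hKM2, Matrix.trace, Matrix.diag, Finset.mul_sum, Finset.sum_ite_eq]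
  have hL : (z • J - K₀) * M =
      Matrix.fromBlocks (Matrix.of fun (_ _ : Fin 1) => (z - 1) * M₁₁) 0 0
        (-(Ξ⁻¹ * Mhat)) := by
    rw [hJ, hK₀, hM]
    ext i j
    rcases i with i | i <;> rcases j with j | j <;>
      simp [Matrix.mul_apply, Fintype.sum_sum_type, Matrix.one_apply, ite_mul,
        sub_mul, Finset.sum_sub_distrib, Finset.sum_ite_eq, Fin.fin_one_eq_zero]
  rw [hsum, hL] at hDEL
  have h11 := fun i j => Matrix.ext_iff.mpr hDEL (Sum.inl i) (Sum.inl j)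
  have h22 : 1 + -(Ξ⁻¹ * Mhat) + M₁₁ • Mhat = 0 := by
    ext i j
    have := Matrix.ext_iff.mpr hDEL (Sum.inr i) (Sum.inr j)
    simpa [Matrix.one_apply] using this
  constructor
  · have := h11 0 0
    simpa [Matrix.one_apply] using this
  · intro hu
    have key : (Ξ⁻¹ - M₁₁ • (1 : Matrix (Fin γs) (Fin γs) ℂ)) * Mhat = 1 := by
      have h' : Ξ⁻¹ * Mhat - M₁₁ • Mhat = 1 := by
        linear_combination (norm := noncomm_ring) -h22
      rw [sub_mul, smul_mul_assoc, one_mul]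
      exact h'
    exact (Matrix.inv_eq_right_inv key).symm
end

section
/- Let υ, ω ∈ ℂ satisfy (υ - 1 - ω)² = 4ω. Then for any k ≥ 2, the determinant of the k×k matrix with diagonal entries υ-1, entries υ above the diagonal (all positions (i,j) with j > i), and entries ω on the subdiagonal (positions (i+1,i)), zeros elsewhere below the subdiagonal, equals (υ-1)·k·((υ-1-ω)/2)^{k-1} − ω·(k−1)·((υ-1-ω)/2)^{k-2}. -/
open Matrix

noncomputable def Mk (υ ω : ℂ) (k : ℕ) : Matrix (Fin k) (Fin k) ℂ :=
  Matrix.of fun (i j : Fin k) =>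
    if i.val < j.val then υ
    else if i = j then υ - 1
    else if j.val + 1 = i.val then ω
    else 0

lemma Mk_eq (υ ω : ℂ) {k m : ℕ} (i j : Fin k) (i' j' : Fin m)
    (h1 : (i : ℕ) < j ↔ (i' : ℕ) < j') (h2 : (i : ℕ) = j ↔ (i' : ℕ) = j')
    (h3 : (j : ℕ) + 1 = i ↔ (j' : ℕ) + 1 = i') :
    Mk υ ω k i j = Mk υ ω m i' j' := by
  simp only [Mk, Matrix.of_apply, Fin.ext_iff, h1, h2, h3]

lemma Mk_sub (υ ω : ℂ) (n : ℕ) :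
    (Mk υ ω (n + 1)).submatrix Fin.succ Fin.succ = Mk υ ω n := by
  ext i j
  exact Mk_eq υ ω _ _ i j (by simp) (by simp [Fin.ext_iff]) (by simp)

lemma Mk_minor_det (υ ω : ℂ) (n : ℕ) :
    ((Mk υ ω (n + 2)).submatrix (Fin.succAbove 1) Fin.succ).det
      = (Mk υ ω (n + 1)).det + (Mk υ ω n).det := by
  have hB : (Mk υ ω (n + 2)).submatrix (Fin.succAbove 1) Fin.succ
      = updateRow (Mk υ ω (n + 1)) 0 ((Mk υ ω (n + 1)) 0 + Pi.single 0 1) := by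
    ext i j
    rcases Fin.eq_zero_or_eq_succ i with rfl | ⟨i', rfl⟩
    · have h0 : (Fin.succAbove 1 (0 : Fin (n+1))) = (0 : Fin (n+2)) := by
        simp [Fin.succAbove]
      rw [updateRow_self]
      rcases Fin.eq_zero_or_eq_succ j with rfl | ⟨j', rfl⟩
      · simp [h0, Mk, Pi.single_apply]
      · simp only [submatrix_apply, h0, Pi.add_apply, Pi.single_apply]
        have : (Fin.succ j' : Fin (n+1)) ≠ 0 := Fin.succ_ne_zero j'
        simp [Mk, this, Fin.ext_iff]
    · have hs : (Fin.succAbove 1 (Fin.succ i')) = Fin.succ (Fin.succ i') := by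
        simp [Fin.succAbove, Fin.lt_def]
      rw [updateRow_ne (Fin.succ_ne_zero i')]
      simp only [submatrix_apply, hs]
      exact Mk_eq υ ω _ _ _ _ (by simp) (by simp [Fin.ext_iff]) (by simp)
  rw [hB, det_updateRow_add]
  congr 1
  · rw [updateRow_eq_self]
  · rw [det_succ_row_zero]
    rw [Fin.sum_univ_succ]
    have h0 : updateRow (Mk υ ω (n + 1)) 0 (Pi.single 0 1) 0 = Pi.single 0 1 :=
      updateRow_self
    have hz : ∀ j : Fin n, updateRow (Mk υ ω (n + 1)) 0 (Pi.single (0 : Fin (n+1)) (1:ℂ)) 0 j.succ = 0 := by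
      intro j
      rw [updateRow_self]
      exact Pi.single_eq_of_ne (Fin.succ_ne_zero j) 1
    rw [Finset.sum_eq_zero (fun j _ => by rw [hz j]; ring)]
    have hsub : (updateRow (Mk υ ω (n + 1)) 0 (Pi.single 0 1)).submatrix Fin.succ
        ((0 : Fin (n+1)).succAbove) = Mk υ ω n := by
      rw [Fin.succAbove_zero]
      rw [← Mk_sub υ ω n]
      ext i j
      simp [updateRow_ne (Fin.succ_ne_zero i)]
    rw [hsub]
    simp [updateRow_self, Pi.single_apply]

lemma Mk_rec (υ ω : ℂ) (n : ℕ) :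
    (Mk υ ω (n + 2)).det = (υ - 1 - ω) * (Mk υ ω (n + 1)).det - ω * (Mk υ ω n).det := by
  rw [det_succ_column_zero]
  rw [Fin.sum_univ_succ, Fin.sum_univ_succ]
  have hz : ∀ i : Fin n, Mk υ ω (n + 2) i.succ.succ 0 = 0 := by
    intro i
    simp [Mk, Fin.ext_iff]
  rw [Finset.sum_eq_zero (fun i _ => by rw [hz i]; ring)]
  have h00 : Mk υ ω (n + 2) 0 0 = υ - 1 := by simp [Mk]
  have h10 : Mk υ ω (n + 2) 1 0 = ω := by
    simp [Mk, Fin.ext_iff]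
  have hm0 : ((Mk υ ω (n + 2)).submatrix ((0 : Fin (n+2)).succAbove) Fin.succ).det
      = (Mk υ ω (n + 1)).det := by
    rw [Fin.succAbove_zero, Mk_sub]
  simp only [Fin.succ_zero_eq_one]
  rw [h00, h10, hm0, Mk_minor_det]
  simp only [Fin.val_zero, Fin.val_one, pow_zero, pow_one]
  ring

lemma Mk_det1 (υ ω : ℂ) : (Mk υ ω 1).det = υ - 1 := by
  rw [det_fin_one]; simp [Mk]

lemma Mk_det2 (υ ω : ℂ) : (Mk υ ω 2).det = (υ - 1) * (υ - 1) - υ * ω := by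
  rw [det_fin_two]; simp [Mk]

lemma Mk_closed (υ ω c : ℂ) (hυ : υ = 2*c + c^2 + 1) (hω : ω = c^2) (n : ℕ) :
    (Mk υ ω (n+1)).det = (υ - 1) * ((n : ℂ) + 1) * c ^ n - (n : ℂ) * c ^ (n + 1) := by
  induction n using Nat.twoStepInduction with
  | zero => rw [Mk_det1]; push_cast; ring
  | one => rw [Mk_det2]; subst hυ hω; push_cast; ring
  | more n ih1 ih2 =>
    rw [show n + 2 + 1 = (n + 1) + 2 from rfl, Mk_rec, ih2, ih1]
    subst hυ hω
    push_cast
    ring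

/-- determinant of the lower-Hessenberg matrix with diagonal `υ-1`,
all entries `υ` above the diagonal, and `ω` on the subdiagonal, given `(υ-1-ω)² = 4ω`. -/
theorem stmt_19 (k : ℕ) (hk : 2 ≤ k) (υ ω : ℂ) (h : (υ - 1 - ω) ^ 2 = 4 * ω)
    (A : Matrix (Fin k) (Fin k) ℂ)
    (hA : A = Matrix.of fun (i j : Fin k) =>
      if i.val < j.val then υ
      else if i = j then υ - 1
      else if j.val + 1 = i.val then ω
      else 0) :
    A.det = (υ - 1) * (k : ℂ) * ((υ - 1 - ω) / 2) ^ (k - 1)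
      - ω * ((k : ℂ) - 1) * ((υ - 1 - ω) / 2) ^ (k - 2) := by
  subst hA
  set c : ℂ := (υ - 1 - ω) / 2 with hc
  have hω : ω = c ^ 2 := by rw [hc]; linear_combination -h / 4
  have hυ : υ = 2 * c + c ^ 2 + 1 := by rw [← hω, hc]; ring
  obtain ⟨m, rfl⟩ : ∃ m, k = m + 2 := ⟨k - 2, by omega⟩
  show (Mk υ ω (m + 2)).det = _
  rw [show m + 2 = (m + 1) + 1 from rfl, Mk_closed υ ω c hυ hω (m + 1)]
  rw [show m + 1 + 1 - 1 = m + 1 from rfl, show m + 1 + 1 - 2 = m from rfl, hω]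
  push_cast
  ring
end
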